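/- Let M be symmetric positive definite and (e₀,e₁,e₂) an M-obtuse superbase of Z^2. Then for every e ∈ Z^2 \ {±e₀, ±e₁, ±e₂} with coprime coordinates, ‖e‖_M ≥ max{‖e₀‖_M, ‖e₁‖_M, ‖e₂‖_M}, where ‖e‖_M := √⟨e, M e⟩. The inequality is strict if no basis (f,g) of Z^2 (|det(f,g)| = 1) satisfies ⟨f, M g⟩ = 0. -/
import Mathlib
set_option maxHeartbeats 800000


def det2 (f g : ℤ × ℤ) : ℤ := f.1 * g.2 - f.2 * g.1

def qf (M : Matrix (Fin 2) (Fin 2) ℝ) (f g : ℤ × ℤ) : ℝ :=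
  (f.1 : ℝ) * (M 0 0 * g.1 + M 0 1 * g.2) + (f.2 : ℝ) * (M 1 0 * g.1 + M 1 1 * g.2)

def IsSuperbase (e₀ e₁ e₂ : ℤ × ℤ) : Prop := e₀ + e₁ + e₂ = 0 ∧ |det2 e₁ e₂| = 1

def IsObtuse (M : Matrix (Fin 2) (Fin 2) ℝ) (e₀ e₁ e₂ : ℤ × ℤ) : Prop :=
  qf M e₀ e₁ ≤ 0 ∧ qf M e₀ e₂ ≤ 0 ∧ qf M e₁ e₂ ≤ 0

/-- The `M`-norm `‖e‖_M = √⟨e, M e⟩`. -/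
noncomputable def normM (M : Matrix (Fin 2) (Fin 2) ℝ) (e : ℤ × ℤ) : ℝ :=
  Real.sqrt (qf M e e)

/-- Elements of an `M`-obtuse superbase have minimal `M`-norm among primitive lattice
vectors; the inequality is strict when `M` is generic (no `M`-orthogonal basis). -/
theorem stmt10_obtuse_minimal (M : Matrix (Fin 2) (Fin 2) ℝ)
    (hsym : M.IsSymm) (hpos : M.PosDef)
    (e₀ e₁ e₂ : ℤ × ℤ) (hsb : IsSuperbase e₀ e₁ e₂) (hobt : IsObtuse M e₀ e₁ e₂)
    (e : ℤ × ℤ) (hgcd : Int.gcd e.1 e.2 = 1)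
    (hne : e ∉ ({e₀, -e₀, e₁, -e₁, e₂, -e₂} : Set (ℤ × ℤ))) :
    max (normM M e₀) (max (normM M e₁) (normM M e₂)) ≤ normM M e ∧
    ((∀ f g : ℤ × ℤ, |det2 f g| = 1 → qf M f g ≠ 0) →
      max (normM M e₀) (max (normM M e₁) (normM M e₂)) < normM M e) := by
  obtain ⟨hsum, hdet⟩ := hsb
  obtain ⟨h01, h02, h12⟩ := hobt
  have hM : M 1 0 = M 0 1 := (Matrix.IsSymm.apply hsym 0 1)
  have hdet' : |e₁.1 * e₂.2 - e₁.2 * e₂.1| = 1 := hdet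
  have hD2 : (e₁.1 * e₂.2 - e₁.2 * e₂.1) * (e₁.1 * e₂.2 - e₁.2 * e₂.1) = 1 := by
    have h := sq_abs (e₁.1 * e₂.2 - e₁.2 * e₂.1)
    rw [hdet'] at h
    nlinarith [h]
  have h0x : e₀.1 = -e₁.1 - e₂.1 := by
    have := congrArg Prod.fst hsum
    simp [Prod.fst_add] at this
    linarith
  have h0y : e₀.2 = -e₁.2 - e₂.2 := by
    have := congrArg Prod.snd hsum
    simp [Prod.snd_add] at this
    linarith
  obtain ⟨a, b, he1, he2⟩ : ∃ a b : ℤ, e.1 = a * e₁.1 + b * e₂.1 ∧ e.2 = a * e₁.2 + b * e₂.2 := by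
    refine ⟨(e₁.1 * e₂.2 - e₁.2 * e₂.1) * (e.1 * e₂.2 - e.2 * e₂.1),
      (e₁.1 * e₂.2 - e₁.2 * e₂.1) * (e₁.1 * e.2 - e₁.2 * e.1), ?_, ?_⟩
    · linear_combination (-e.1) * hD2
    · linear_combination (-e.2) * hD2
  simp only [Set.mem_insert_iff, Set.mem_singleton_iff, not_or] at hne
  obtain ⟨hne0, hne0', hne1, hne1', hne2, hne2'⟩ := hne
  have hcop : IsCoprime e.1 e.2 := Int.isCoprime_iff_gcd_eq_one.mpr hgcd
  -- a ≠ 0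
  have haz : a ≠ 0 := by
    rintro rfl
    have hu : IsUnit b := hcop.isUnit_of_dvd' ⟨e₂.1, by linarith⟩ ⟨e₂.2, by linarith⟩
    rcases Int.isUnit_iff.mp hu with rfl | rfl
    · exact hne2 (Prod.ext_iff.mpr ⟨by linarith, by linarith⟩)
    · refine hne2' (Prod.ext_iff.mpr ⟨?_, ?_⟩) <;> simp <;> linarith
  have hbz : b ≠ 0 := by
    rintro rfl
    have hu : IsUnit a := hcop.isUnit_of_dvd' ⟨e₁.1, by linarith⟩ ⟨e₁.2, by linarith⟩
    rcases Int.isUnit_iff.mp hu with rfl | rfl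
    · exact hne1 (Prod.ext_iff.mpr ⟨by linarith, by linarith⟩)
    · refine hne1' (Prod.ext_iff.mpr ⟨?_, ?_⟩) <;> simp <;> linarith
  have hab : a ≠ b := by
    intro h
    subst h
    have hu : IsUnit a := hcop.isUnit_of_dvd' ⟨-e₀.1, by rw [h0x] at *; linarith⟩
      ⟨-e₀.2, by rw [h0y] at *; linarith⟩
    rcases Int.isUnit_iff.mp hu with rfl | rfl
    · refine hne0' (Prod.ext_iff.mpr ⟨?_, ?_⟩) <;> simp [h0x, h0y] at * <;> linarith
    · refine hne0 (Prod.ext_iff.mpr ⟨?_, ?_⟩) <;> simp [h0x, h0y] at * <;> linarith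
  -- real casts
  have he1R : (e.1 : ℝ) = (a : ℝ) * e₁.1 + (b : ℝ) * e₂.1 := by exact_mod_cast he1
  have he2R : (e.2 : ℝ) = (a : ℝ) * e₁.2 + (b : ℝ) * e₂.2 := by exact_mod_cast he2
  have h0xR : (e₀.1 : ℝ) = -(e₁.1 : ℝ) - e₂.1 := by exact_mod_cast h0x
  have h0yR : (e₀.2 : ℝ) = -(e₁.2 : ℝ) - e₂.2 := by exact_mod_cast h0y
  have ha2 : (1 : ℝ) ≤ (a : ℝ) ^ 2 := by
    have : 1 ≤ a ^ 2 := by rcases haz.lt_or_gt with h | h <;> nlinarith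
    exact_mod_cast this
  have hb2 : (1 : ℝ) ≤ (b : ℝ) ^ 2 := by
    have : 1 ≤ b ^ 2 := by rcases hbz.lt_or_gt with h | h <;> nlinarith
    exact_mod_cast this
  have hab2 : (1 : ℝ) ≤ ((a : ℝ) - b) ^ 2 := by
    have h' : a - b ≠ 0 := sub_ne_zero.mpr hab
    have : 1 ≤ (a - b) ^ 2 := by rcases h'.lt_or_gt with h | h <;> nlinarith
    calc (1 : ℝ) ≤ ((a - b : ℤ) : ℝ) ^ 2 := by exact_mod_cast this
      _ = ((a : ℝ) - b) ^ 2 := by push_cast; ring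
  -- key polynomial identities
  have hA : qf M e e - qf M e₀ e₀ =
      ((a : ℝ) - b) ^ 2 * (-(qf M e₁ e₂)) + ((a : ℝ) ^ 2 - 1) * (-(qf M e₀ e₁))
        + ((b : ℝ) ^ 2 - 1) * (-(qf M e₀ e₂)) := by
    simp only [qf]; rw [he1R, he2R, h0xR, h0yR, hM]; ring
  have hB : qf M e e - qf M e₁ e₁ =
      (((a : ℝ) - b) ^ 2 - 1) * (-(qf M e₁ e₂)) + ((a : ℝ) ^ 2 - 1) * (-(qf M e₀ e₁))
        + (b : ℝ) ^ 2 * (-(qf M e₀ e₂)) := by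
    simp only [qf]; rw [he1R, he2R, h0xR, h0yR, hM]; ring
  have hC : qf M e e - qf M e₂ e₂ =
      (((a : ℝ) - b) ^ 2 - 1) * (-(qf M e₁ e₂)) + (a : ℝ) ^ 2 * (-(qf M e₀ e₁))
        + ((b : ℝ) ^ 2 - 1) * (-(qf M e₀ e₂)) := by
    simp only [qf]; rw [he1R, he2R, h0xR, h0yR, hM]; ring
  have hQ0 : qf M e₀ e₀ = -(qf M e₀ e₁) + -(qf M e₀ e₂) := by
    simp only [qf]; rw [h0xR, h0yR, hM]; ring
  have hQ1 : qf M e₁ e₁ = -(qf M e₀ e₁) + -(qf M e₁ e₂) := by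
    simp only [qf]; rw [h0xR, h0yR, hM]; ring
  have hQ2 : qf M e₂ e₂ = -(qf M e₀ e₂) + -(qf M e₁ e₂) := by
    simp only [qf]; rw [h0xR, h0yR, hM]; ring
  have hp0 : (0 : ℝ) ≤ -(qf M e₁ e₂) := by linarith
  have hp1 : (0 : ℝ) ≤ -(qf M e₀ e₂) := by linarith
  have hp2 : (0 : ℝ) ≤ -(qf M e₀ e₁) := by linarith
  have m1 : (0:ℝ) ≤ (((a:ℝ) - b) ^ 2 - 1) * (-(qf M e₁ e₂)) :=
    mul_nonneg (by linarith) hp0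
  have m1' : (0:ℝ) ≤ (((a:ℝ) - b) ^ 2) * (-(qf M e₁ e₂)) :=
    mul_nonneg (by positivity) hp0
  have m2 : (0:ℝ) ≤ ((a:ℝ) ^ 2 - 1) * (-(qf M e₀ e₁)) := mul_nonneg (by linarith) hp2
  have m2' : (0:ℝ) ≤ ((a:ℝ) ^ 2) * (-(qf M e₀ e₁)) := mul_nonneg (by positivity) hp2
  have m3 : (0:ℝ) ≤ ((b:ℝ) ^ 2 - 1) * (-(qf M e₀ e₂)) := mul_nonneg (by linarith) hp1
  have m3' : (0:ℝ) ≤ ((b:ℝ) ^ 2) * (-(qf M e₀ e₂)) := mul_nonneg (by positivity) hp1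
  have hQA : qf M e₀ e₀ ≤ qf M e e := by linarith [hA, m1', m2, m3]
  have hQB : qf M e₁ e₁ ≤ qf M e e := by linarith [hB, m1, m2, m3']
  have hQC : qf M e₂ e₂ ≤ qf M e e := by linarith [hC, m1, m2', m3]
  constructor
  · unfold normM
    exact max_le (Real.sqrt_le_sqrt hQA)
      (max_le (Real.sqrt_le_sqrt hQB) (Real.sqrt_le_sqrt hQC))
  · intro hgen
    have hd01 : |det2 e₀ e₁| = 1 := by
      have : det2 e₀ e₁ = det2 e₁ e₂ := by simp only [det2]; rw [h0x, h0y]; ring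
      rw [this]; exact hdet
    have hd02 : |det2 e₀ e₂| = 1 := by
      have : det2 e₀ e₂ = -det2 e₁ e₂ := by simp only [det2]; rw [h0x, h0y]; ring
      rw [this, abs_neg]; exact hdet
    have hs0 : (0:ℝ) < -(qf M e₁ e₂) :=
      lt_of_le_of_ne hp0 (fun h => hgen e₁ e₂ hdet (by linarith))
    have hs1 : (0:ℝ) < -(qf M e₀ e₂) :=
      lt_of_le_of_ne hp1 (fun h => hgen e₀ e₂ hd02 (by linarith))
    have hs2 : (0:ℝ) < -(qf M e₀ e₁) :=
      lt_of_le_of_ne hp2 (fun h => hgen e₀ e₁ hd01 (by linarith))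
    have hAnn : (0:ℝ) ≤ qf M e₀ e₀ := by linarith [hQ0]
    have hBnn : (0:ℝ) ≤ qf M e₁ e₁ := by linarith [hQ1]
    have hCnn : (0:ℝ) ≤ qf M e₂ e₂ := by linarith [hQ2]
    have hQA' : qf M e₀ e₀ < qf M e e := by linarith [hA, m1, m2, m3, hs0]
    have hQB' : qf M e₁ e₁ < qf M e e := by linarith [hB, m1, m2, m3, hs1]
    have hQC' : qf M e₂ e₂ < qf M e e := by linarith [hC, m1, m2, m3, hs2]
    unfold normM
    exact max_lt (Real.sqrt_lt_sqrt hAnn hQA')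
      (max_lt (Real.sqrt_lt_sqrt hBnn hQB') (Real.sqrt_lt_sqrt hCnn hQC'))
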